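/- Let X and Y be finite multisets of positive dyadic rationals and G = Σ_{x∈X} *:x + Σ_{y∈Y} *:(-y). Then in normal play, G + * > 0 if |X| > |Y|, G + * is incomparable with 0 if |X| = |Y|, and G + * < 0 if |X| < |Y|. -/

import Mathlib

namespace SetTheory

/-- Pre-games, as `SetTheory.PGame` was in Mathlib (removed since). -/
inductive PGame.{u} : Type (u + 1)
  | mk : ∀ α β : Type u, (α → PGame) → (β → PGame) → PGame

universe u

namespace PGame

def LeftMoves : PGame.{u} → Type u
  | mk l _ _ _ => l

def RightMoves : PGame.{u} → Type u
  | mk _ r _ _ => r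

def moveLeft : ∀ g : PGame, LeftMoves g → PGame
  | mk _ _ L _ => L

def moveRight : ∀ g : PGame, RightMoves g → PGame
  | mk _ _ _ R => R

inductive IsOption : PGame → PGame → Prop
  | moveLeft {x : PGame} (i : x.LeftMoves) : IsOption (x.moveLeft i) x
  | moveRight {x : PGame} (i : x.RightMoves) : IsOption (x.moveRight i) x

def Subsequent : PGame → PGame → Prop :=
  Relation.TransGen IsOption

instance : Zero PGame := ⟨⟨PEmpty, PEmpty, PEmpty.elim, PEmpty.elim⟩⟩

def star : PGame := ⟨PUnit, PUnit, fun _ => 0, fun _ => 0⟩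

def neg : PGame → PGame
  | ⟨l, r, L, R⟩ => ⟨r, l, fun i => neg (R i), fun i => neg (L i)⟩

instance : Neg PGame := ⟨neg⟩

def addAux {xl xr : Type u} (IHL : xl → PGame.{u} → PGame.{u})
    (IHR : xr → PGame.{u} → PGame.{u}) : PGame.{u} → PGame.{u}
  | mk yl yr yL yR =>
    mk (xl ⊕ yl) (xr ⊕ yr)
      (Sum.elim (fun i => IHL i (mk yl yr yL yR)) (fun j => addAux IHL IHR (yL j)))
      (Sum.elim (fun i => IHR i (mk yl yr yL yR)) (fun j => addAux IHL IHR (yR j)))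

def add : PGame.{u} → PGame.{u} → PGame.{u}
  | mk _ _ xL xR => addAux (fun i => add (xL i)) (fun i => add (xR i))

instance : Add PGame := ⟨add⟩

/-- `(leLF x y).1 = (x ≤ y)`, `(leLF x y).2 = (x ⧏ y)`, with
`x ≤ y ↔ (∀ i, xL i ⧏ y) ∧ (∀ j, x ⧏ yR j)` and
`x ⧏ y ↔ (∃ i, x ≤ yL i) ∨ (∃ j, xR j ≤ y)`. -/
noncomputable def leLF (x : PGame) : PGame → Prop × Prop :=
  PGame.rec (motive := fun _ => PGame → Prop × Prop)
    (fun _ _ _ _ IHxL IHxR y =>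
      PGame.rec (motive := fun _ => Prop × Prop)
        (fun yl yr yL yR IHyL IHyR =>
          ((∀ i, ((IHxL i) (mk yl yr yL yR)).2) ∧ (∀ j, (IHyR j).2),
           (∃ i, (IHyL i).1) ∨ (∃ j, ((IHxR j) (mk yl yr yL yR)).1))) y) x

instance : LE PGame := ⟨fun x y => (leLF x y).1⟩

instance : LT PGame := ⟨fun x y => x ≤ y ∧ ¬ y ≤ x⟩

def Fuzzy (x y : PGame) : Prop := ¬ y ≤ x ∧ ¬ x ≤ y

end PGame

end SetTheory

open SetTheory

namespace Sprigs

/-- Partizan games (in the lowest universe). -/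
abbrev PG : Type 1 := PGame.{0}

/-- Winning predicates moving first under misère play:
`(mw G).1` = Left wins moving first; `(mw G).2` = Right wins moving first. -/
def mw : PG → Prop × Prop
  | PGame.mk α β L R =>
    ((IsEmpty α ∨ ∃ i, ¬ (mw (L i)).2), (IsEmpty β ∨ ∃ j, ¬ (mw (R j)).1))

/-- Winning predicates moving first under normal play. -/
def nw : PG → Prop × Prop
  | PGame.mk _ _ L R => ((∃ i, ¬ (nw (L i)).2), (∃ j, ¬ (nw (R j)).1))

/-- Outcome classes. -/
inductive Outcome : Type
  | L | R | N | P
deriving DecidableEq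

/-- The outcome determined by "Left wins moving first" and "Right wins moving first". -/
noncomputable def outcomeOf (wl wr : Prop) : Outcome :=
  haveI := Classical.propDecidable wl
  haveI := Classical.propDecidable wr
  if wl then (if wr then .N else .L) else (if wr then .R else .P)

/-- Misère-play outcome. -/
noncomputable def mo (G : PG) : Outcome := outcomeOf (mw G).1 (mw G).2

/-- Normal-play outcome. -/
noncomputable def no (G : PG) : Outcome := outcomeOf (nw G).1 (nw G).2

/-- Partial order on outcomes: R < P < L and R < N < L, with P, N incomparable. -/
def Outcome.le : Outcome → Outcome → Prop
  | .R, _ => True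
  | _, .L => True
  | a, b => a = b

def Outcome.lt (a b : Outcome) : Prop := Outcome.le a b ∧ a ≠ b

/-- Dicot games: every subposition has moves for both players or neither. -/
def Dicot : PG → Prop
  | PGame.mk α β L R =>
    ((IsEmpty α ∧ IsEmpty β) ∨ (Nonempty α ∧ Nonempty β)) ∧
      (∀ i, Dicot (L i)) ∧ (∀ j, Dicot (R j))

/-- Ordinal sum `G : H`. -/
def ordSum (G : PG) : PG → PGame
  | PGame.mk α β L R =>
    PGame.mk (G.LeftMoves ⊕ α) (G.RightMoves ⊕ β)
      (Sum.elim G.moveLeft (fun a => ordSum G (L a)))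
      (Sum.elim G.moveRight (fun b => ordSum G (R b)))

/-- Canonical form of a natural number as a game. -/
def natGame : ℕ → PGame
  | 0 => PGame.mk PEmpty PEmpty PEmpty.elim PEmpty.elim
  | n + 1 => PGame.mk PUnit PEmpty (fun _ => natGame n) PEmpty.elim

/-- Canonical form of an integer as a game. -/
def intGame (m : ℤ) : PG := if 0 ≤ m then natGame m.toNat else -natGame (-m).toNat

/-- Canonical form of the dyadic rational `m / 2 ^ n` as a game. -/
def dGame : ℕ → ℤ → PGame
  | 0, m => intGame m
  | n + 1, m =>
    if m % 2 = 0 then dGame n (m / 2)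
    else PGame.mk PUnit PUnit (fun _ => dGame n ((m - 1) / 2)) (fun _ => dGame n ((m + 1) / 2))

/-- A rational number is dyadic if its denominator is a power of two. -/
def IsDyadic (q : ℚ) : Prop := ∃ n : ℕ, q.den = 2 ^ n

/-- The canonical-form game of a dyadic rational. -/
def qGame (q : ℚ) : PG := dGame (Nat.log 2 q.den) q.num

/-- The Sprig `* : x` for a dyadic rational `x`. -/
def sprig (q : ℚ) : PG := ordSum PGame.star (qGame q)

/-- The Sprig `* : x̄` where `x̄` is the conjugate of the dyadic rational `x`. -/
def sprigNeg (q : ℚ) : PG := ordSum PGame.star (-qGame q)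

/-- Disjunctive sum of a list of games. -/
def listSum (l : List PG) : PG := l.foldr (· + ·) 0

/-- The position `(X, Y) = Σ_{x ∈ X} *:x + Σ_{y ∈ Y} *:(-y)`. -/
def sprigsGame (X Y : List ℚ) : PG := listSum (X.map sprig ++ Y.map sprigNeg)

/-- The minimum of a nonempty multiset of rationals (0 for the empty multiset). -/
noncomputable def mmin (s : Multiset ℚ) : ℚ :=
  if h : s = 0 then 0 else
    s.toFinset.min' (by rwa [Multiset.toFinset_nonempty])

/-- The edge `ε` computed from the reduced multisets `X' = X \ Y` and `Y' = Y \ X`. -/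
noncomputable def edge (X Y : Multiset ℚ) : ℚ :=
  if X - Y = 0 ∨ Y - X = 0 then 0 else mmin (X - Y) - mmin (Y - X)

/-- The universe `S` of finite sums of Sprigs (and `*`). -/
inductive InS : PG → Prop
  | star : InS PGame.star
  | sprig {q : ℚ} (h : IsDyadic q) : InS (sprig q)
  | sprigNeg {q : ℚ} (h : IsDyadic q) : InS (sprigNeg q)
  | add {a b : PG} : InS a → InS b → InS (a + b)

/-- A universe: a set of games closed under disjunctive sum and followers. -/
def IsUniverse (S : Set PG) : Prop :=
  (∀ a ∈ S, ∀ b ∈ S, a + b ∈ S) ∧ ∀ a ∈ S, ∀ b, PGame.Subsequent b a → b ∈ S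

end Sprigs

namespace SetTheory

namespace PGame

universe u

/-! ### Basic theory of pre-games (ported from the removed Mathlib development) -/

notation:50 x:50 " ⧏ " y:50 => ¬ y ≤ x

theorem leLF_mk {xl xr : Type u} (xL : xl → PGame.{u}) (xR : xr → PGame.{u}) {yl yr : Type u}
    (yL : yl → PGame.{u}) (yR : yr → PGame.{u}) :
    leLF (mk xl xr xL xR) (mk yl yr yL yR) =
      ((∀ i, (leLF (xL i) (mk yl yr yL yR)).2) ∧ (∀ j, (leLF (mk xl xr xL xR) (yR j)).2),
       (∃ i, (leLF (mk xl xr xL xR) (yL i)).1) ∨ (∃ j, (leLF (xR j) (mk yl yr yL yR)).1)) := rfl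

theorem leLF_snd_iff : ∀ x y : PGame.{u},
    ((leLF x y).2 ↔ ¬ (leLF y x).1) ∧ ((leLF y x).2 ↔ ¬ (leLF x y).1) := by
  intro x
  induction x with
  | mk xl xr xL xR ihxL ihxR =>
    intro y
    induction y with
    | mk yl yr yL yR ihyL ihyR =>
      rw [leLF_mk xL xR yL yR, leLF_mk yL yR xL xR]
      dsimp only
      constructor
      · rw [not_and_or, not_forall, not_forall]
        apply or_congr
        · apply exists_congr; intro i; rw [(ihyL i).2, not_not]
        · apply exists_congr; intro j; rw [(ihxR j (mk yl yr yL yR)).2, not_not]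
      · rw [not_and_or, not_forall, not_forall]
        apply or_congr
        · apply exists_congr; intro i; rw [(ihxL i (mk yl yr yL yR)).1, not_not]
        · apply exists_congr; intro j; rw [(ihyR j).1, not_not]

theorem le_iff_forall_lf {x y : PGame.{u}} :
    x ≤ y ↔ (∀ i, x.moveLeft i ⧏ y) ∧ ∀ j, x ⧏ y.moveRight j := by
  cases x with
  | mk xl xr xL xR =>
  cases y with
  | mk yl yr yL yR =>
  have h : (mk xl xr xL xR ≤ mk yl yr yL yR) ↔ ((∀ i, (leLF (xL i) (mk yl yr yL yR)).2) ∧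
      ∀ j, (leLF (mk xl xr xL xR) (yR j)).2) := Iff.rfl
  rw [h]
  exact and_congr (forall_congr' fun i => (leLF_snd_iff _ _).1)
    (forall_congr' fun j => (leLF_snd_iff _ _).1)

theorem lf_iff_exists_le {x y : PGame.{u}} :
    x ⧏ y ↔ (∃ i, x ≤ y.moveLeft i) ∨ ∃ j, x.moveRight j ≤ y := by
  cases x with
  | mk xl xr xL xR =>
  cases y with
  | mk yl yr yL yR =>
  exact (leLF_snd_iff (mk xl xr xL xR) (mk yl yr yL yR)).1.symm

theorem lf_of_le_moveLeft {x y : PGame.{u}} {j : y.LeftMoves} (h : x ≤ y.moveLeft j) : x ⧏ y :=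
  lf_iff_exists_le.2 (Or.inl ⟨j, h⟩)

theorem lf_of_moveRight_le {x y : PGame.{u}} {j : x.RightMoves} (h : x.moveRight j ≤ y) : x ⧏ y :=
  lf_iff_exists_le.2 (Or.inr ⟨j, h⟩)

theorem moveLeft_lf_of_le {x y : PGame.{u}} (h : x ≤ y) (i : x.LeftMoves) : x.moveLeft i ⧏ y :=
  (le_iff_forall_lf.1 h).1 i

theorem lf_moveRight_of_le {x y : PGame.{u}} (h : x ≤ y) (j : y.RightMoves) : x ⧏ y.moveRight j :=
  (le_iff_forall_lf.1 h).2 j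

theorem le_of_forall_lf {x y : PGame.{u}} (h1 : ∀ i, x.moveLeft i ⧏ y)
    (h2 : ∀ j, x ⧏ y.moveRight j) : x ≤ y :=
  le_iff_forall_lf.2 ⟨h1, h2⟩

theorem pg_le_refl (x : PGame.{u}) : x ≤ x := by
  induction x with
  | mk xl xr xL xR ihL ihR =>
    exact le_of_forall_lf (fun i => lf_of_le_moveLeft (j := i) (ihL i))
      (fun j => lf_of_moveRight_le (j := j) (ihR j))

theorem le_trans_aux {x y z : PGame.{u}}
    (h₁ : ∀ {i}, y ≤ z → z ≤ x.moveLeft i → y ≤ x.moveLeft i)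
    (h₂ : ∀ {j}, z.moveRight j ≤ x → x ≤ y → z.moveRight j ≤ y) (hxy : x ≤ y) (hyz : y ≤ z) :
    x ≤ z :=
  le_of_forall_lf (fun i h => moveLeft_lf_of_le hxy i (h₁ hyz h))
    (fun j h => lf_moveRight_of_le hyz j (h₂ h hxy))

theorem pg_le_trans_all : ∀ x y z : PGame.{u},
    (x ≤ y → y ≤ z → x ≤ z) ∧ (y ≤ z → z ≤ x → y ≤ x) ∧ (z ≤ x → x ≤ y → z ≤ y) := by
  intro x
  induction x with
  | mk xl xr xL xR IHxl IHxr =>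
    intro y
    induction y with
    | mk yl yr yL yR IHyl IHyr =>
      intro z
      induction z with
      | mk zl zr zL zR IHzl IHzr =>
        exact ⟨le_trans_aux (fun h1 h2 => (IHxl _ _ _).2.1 h1 h2) (fun h1 h2 => (IHzr _).2.2 h1 h2),
          le_trans_aux (fun h1 h2 => (IHyl _ _).2.2 h1 h2) (fun h1 h2 => (IHxr _ _ _).1 h1 h2),
          le_trans_aux (fun h1 h2 => (IHzl _).1 h1 h2) (fun h1 h2 => (IHyr _ _).2.1 h1 h2)⟩

theorem pg_le_trans {x y z : PGame.{u}} (h1 : x ≤ y) (h2 : y ≤ z) : x ≤ z :=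
  (pg_le_trans_all x y z).1 h1 h2

def Equiv (x y : PGame.{u}) : Prop := x ≤ y ∧ y ≤ x

instance : HasEquiv PGame.{u} := ⟨Equiv⟩

theorem equiv_rfl {x : PGame.{u}} : x ≈ x := ⟨pg_le_refl x, pg_le_refl x⟩

theorem Equiv.symm {x y : PGame.{u}} (h : x ≈ y) : y ≈ x := ⟨h.2, h.1⟩

theorem Equiv.trans {x y z : PGame.{u}} (h1 : x ≈ y) (h2 : y ≈ z) : x ≈ z :=
  ⟨pg_le_trans h1.1 h2.1, pg_le_trans h2.2 h1.2⟩

theorem equiv_of_moves {x y : PGame.{u}}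
    (hL1 : ∀ i, ∃ j, x.moveLeft i ≈ y.moveLeft j)
    (hL2 : ∀ j, ∃ i, x.moveLeft i ≈ y.moveLeft j)
    (hR1 : ∀ i, ∃ j, x.moveRight i ≈ y.moveRight j)
    (hR2 : ∀ j, ∃ i, x.moveRight i ≈ y.moveRight j) : x ≈ y := by
  refine ⟨le_of_forall_lf (fun i => ?_) (fun j => ?_), le_of_forall_lf (fun i => ?_) (fun j => ?_)⟩
  · obtain ⟨j, h⟩ := hL1 i; exact lf_of_le_moveLeft (j := j) h.1
  · obtain ⟨i, h⟩ := hR2 j; exact lf_of_moveRight_le (j := i) h.1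
  · obtain ⟨i', h⟩ := hL2 i; exact lf_of_le_moveLeft (j := i') h.2
  · obtain ⟨j', h⟩ := hR1 j; exact lf_of_moveRight_le (j := j') h.2

theorem le_congr_right {x y z : PGame.{u}} (h : y ≈ z) : x ≤ y ↔ x ≤ z :=
  ⟨fun h' => pg_le_trans h' h.1, fun h' => pg_le_trans h' h.2⟩

theorem le_congr_left {x y z : PGame.{u}} (h : x ≈ y) : x ≤ z ↔ y ≤ z :=
  ⟨fun h' => pg_le_trans h.2 h', fun h' => pg_le_trans h.1 h'⟩

theorem lf_congr_right {x y z : PGame.{u}} (h : y ≈ z) : x ⧏ y ↔ x ⧏ z :=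
  not_congr (le_congr_left h)

theorem lf_congr_left {x y z : PGame.{u}} (h : x ≈ y) : x ⧏ z ↔ y ⧏ z :=
  not_congr (le_congr_right h)

theorem lt_iff_le_and_lf {x y : PGame.{u}} : x < y ↔ x ≤ y ∧ x ⧏ y := Iff.rfl

theorem lt_congr_right {x y z : PGame.{u}} (h : y ≈ z) : x < y ↔ x < z := by
  have := and_congr (le_congr_right (x := x) h) (lf_congr_right (x := x) h)
  exact this

theorem lt_congr_left {x y z : PGame.{u}} (h : x ≈ y) : x < z ↔ y < z := by
  have := and_congr (le_congr_left (z := z) h) (lf_congr_left (z := z) h)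
  exact this

theorem fuzzy_congr_left {x y z : PGame.{u}} (h : x ≈ y) : Fuzzy x z ↔ Fuzzy y z := by
  have := and_congr (not_congr (le_congr_right (x := z) h)) (not_congr (le_congr_left (z := z) h))
  exact this

theorem zero_le_lf {x : PGame.{u}} : 0 ≤ x ↔ ∀ j, 0 ⧏ x.moveRight j := by
  rw [le_iff_forall_lf]
  exact ⟨fun h => h.2, fun h => ⟨fun i => PEmpty.elim i, h⟩⟩

theorem zero_lf_le {x : PGame.{u}} : 0 ⧏ x ↔ ∃ i, 0 ≤ x.moveLeft i := by
  rw [lf_iff_exists_le]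
  exact ⟨fun h => h.elim id (fun ⟨j, _⟩ => PEmpty.elim j), Or.inl⟩

theorem pg_mk_congr {α β : Type u} {f f' : α → PGame.{u}} {g g' : β → PGame.{u}}
    (h1 : f = f') (h2 : g = g') : mk α β f g = mk α β f' g' := by
  rw [h1, h2]

theorem neg_def {xl xr : Type u} {xL : xl → PGame.{u}} {xR : xr → PGame.{u}} :
    -mk xl xr xL xR = mk xr xl (fun j => -xR j) fun i => -xL i := rfl

theorem neg_zero : -(0 : PGame.{u}) = 0 :=
  pg_mk_congr (funext fun i => PEmpty.elim i) (funext fun i => PEmpty.elim i)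

theorem neg_star : -star.{u} = star.{u} := by
  change mk PUnit PUnit (fun _ => -0) (fun _ => -0) = star
  rw [neg_zero]
  rfl

theorem neg_neg (x : PGame.{u}) : - -x = x := by
  induction x with
  | mk xl xr xL xR ihL ihR =>
    show mk xl xr (fun i => - -xL i) (fun j => - -xR j) = mk xl xr xL xR
    simp only [ihL, ihR]

theorem neg_le_neg_all : ∀ x y : PGame.{u}, (-y ≤ -x ↔ x ≤ y) ∧ (-x ≤ -y ↔ y ≤ x) := by
  intro x
  induction x with
  | mk xl xr xL xR ihxL ihxR =>
    intro y
    induction y with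
    | mk yl yr yL yR ihyL ihyR =>
      constructor
      · rw [le_iff_forall_lf (x := -mk yl yr yL yR),
          le_iff_forall_lf (x := mk xl xr xL xR) (y := mk yl yr yL yR), and_comm]
        exact and_congr (forall_congr' fun j => not_congr (ihxL j (mk yl yr yL yR)).2)
          (forall_congr' fun i => not_congr (ihyR i).2)
      · rw [le_iff_forall_lf (x := -mk xl xr xL xR),
          le_iff_forall_lf (x := mk yl yr yL yR) (y := mk xl xr xL xR), and_comm]
        exact and_congr (forall_congr' fun j => not_congr (ihyL j).1)
          (forall_congr' fun i => not_congr (ihxR i (mk yl yr yL yR)).1)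

theorem neg_le_neg_iff {x y : PGame.{u}} : -y ≤ -x ↔ x ≤ y := (neg_le_neg_all x y).1

theorem neg_equiv_neg_iff {x y : PGame.{u}} : -x ≈ -y ↔ x ≈ y :=
  ⟨fun h => ⟨neg_le_neg_iff.1 h.2, neg_le_neg_iff.1 h.1⟩,
    fun h => ⟨neg_le_neg_iff.2 h.2, neg_le_neg_iff.2 h.1⟩⟩

theorem zero_le_neg_iff {x : PGame.{u}} : 0 ≤ -x ↔ x ≤ 0 := by
  have := @neg_le_neg_iff x 0
  rwa [neg_zero] at this

theorem neg_le_zero_iff {x : PGame.{u}} : -x ≤ 0 ↔ 0 ≤ x := by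
  have := @neg_le_neg_iff 0 x
  rwa [neg_zero] at this

theorem zero_lf_neg_iff {x : PGame.{u}} : 0 ⧏ -x ↔ x ⧏ 0 := not_congr neg_le_zero_iff

theorem zero_lt_neg_iff {x : PGame.{u}} : 0 < -x ↔ x < 0 := by
  have := and_congr (zero_le_neg_iff (x := x)) (zero_lf_neg_iff (x := x))
  exact this

theorem leftMoves_add (x y : PGame.{u}) : (x + y).LeftMoves = (x.LeftMoves ⊕ y.LeftMoves) := by
  cases x; cases y; rfl

theorem rightMoves_add (x y : PGame.{u}) : (x + y).RightMoves = (x.RightMoves ⊕ y.RightMoves) := by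
  cases x; cases y; rfl

def toLeftMovesAdd {x y : PGame.{u}} : x.LeftMoves ⊕ y.LeftMoves ≃ (x + y).LeftMoves :=
  _root_.Equiv.cast (leftMoves_add x y).symm

def toRightMovesAdd {x y : PGame.{u}} : x.RightMoves ⊕ y.RightMoves ≃ (x + y).RightMoves :=
  _root_.Equiv.cast (rightMoves_add x y).symm

theorem add_moveLeft_inl {x : PGame.{u}} (y : PGame.{u}) (i : x.LeftMoves) :
    (x + y).moveLeft (toLeftMovesAdd (Sum.inl i)) = x.moveLeft i + y := by
  cases x; cases y; rfl

theorem add_moveLeft_inr (x : PGame.{u}) {y : PGame.{u}} (i : y.LeftMoves) :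
    (x + y).moveLeft (toLeftMovesAdd (Sum.inr i)) = x + y.moveLeft i := by
  cases x; cases y; rfl

theorem add_moveRight_inl {x : PGame.{u}} (y : PGame.{u}) (i : x.RightMoves) :
    (x + y).moveRight (toRightMovesAdd (Sum.inl i)) = x.moveRight i + y := by
  cases x; cases y; rfl

theorem add_moveRight_inr (x : PGame.{u}) {y : PGame.{u}} (i : y.RightMoves) :
    (x + y).moveRight (toRightMovesAdd (Sum.inr i)) = x + y.moveRight i := by
  cases x; cases y; rfl

theorem rightMoves_add_cases {x y : PGame.{u}} (k : (x + y).RightMoves)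
    {P : (x + y).RightMoves → Prop}
    (hl : ∀ j, P (toRightMovesAdd (Sum.inl j))) (hr : ∀ j, P (toRightMovesAdd (Sum.inr j))) :
    P k := by
  rw [← toRightMovesAdd.apply_symm_apply k]
  generalize toRightMovesAdd.symm k = s
  rcases s with i | i
  exacts [hl i, hr i]

theorem zero_add_equiv (x : PGame.{u}) : 0 + x ≈ x := by
  induction x with
  | mk xl xr xL xR ihL ihR =>
    apply equiv_of_moves
    · rintro (e | i)
      · exact PEmpty.elim e
      · exact ⟨i, ihL i⟩
    · intro j; exact ⟨Sum.inr j, ihL j⟩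
    · rintro (e | i)
      · exact PEmpty.elim e
      · exact ⟨i, ihR i⟩
    · intro j; exact ⟨Sum.inr j, ihR j⟩

theorem add_zero_equiv (x : PGame.{u}) : x + 0 ≈ x := by
  induction x with
  | mk xl xr xL xR ihL ihR =>
    apply equiv_of_moves
    · rintro (i | e)
      · exact ⟨i, ihL i⟩
      · exact PEmpty.elim e
    · intro j; exact ⟨Sum.inl j, ihL j⟩
    · rintro (i | e)
      · exact ⟨i, ihR i⟩
      · exact PEmpty.elim e
    · intro j; exact ⟨Sum.inl j, ihR j⟩

theorem add_assoc_equiv {x y z : PGame.{u}} : (x + y) + z ≈ x + (y + z) := by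
  induction x generalizing y z with
  | mk xl xr xL xR ihxL ihxR =>
    induction y generalizing z with
    | mk yl yr yL yR ihyL ihyR =>
      induction z with
      | mk zl zr zL zR ihzL ihzR =>
        apply equiv_of_moves
        · rintro ((i | i) | i)
          · exact ⟨Sum.inl i, ihxL i⟩
          · exact ⟨Sum.inr (Sum.inl i), ihyL i⟩
          · exact ⟨Sum.inr (Sum.inr i), ihzL i⟩
        · rintro (i | (i | i))
          · exact ⟨Sum.inl (Sum.inl i), ihxL i⟩
          · exact ⟨Sum.inl (Sum.inr i), ihyL i⟩
          · exact ⟨Sum.inr i, ihzL i⟩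
        · rintro ((i | i) | i)
          · exact ⟨Sum.inl i, ihxR i⟩
          · exact ⟨Sum.inr (Sum.inl i), ihyR i⟩
          · exact ⟨Sum.inr (Sum.inr i), ihzR i⟩
        · rintro (i | (i | i))
          · exact ⟨Sum.inl (Sum.inl i), ihxR i⟩
          · exact ⟨Sum.inl (Sum.inr i), ihyR i⟩
          · exact ⟨Sum.inr i, ihzR i⟩

theorem add_le_add_right_all : ∀ x y z : PGame.{u},
    (x ≤ y → x + z ≤ y + z) ∧ (x ⧏ y → x + z ⧏ y + z) := by
  intro x
  induction x with
  | mk xl xr xL xR ihxL ihxR =>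
    intro y
    induction y with
    | mk yl yr yL yR ihyL ihyR =>
      intro z
      induction z with
      | mk zl zr zL zR ihzL ihzR =>
        constructor
        · intro h
          have h' := le_iff_forall_lf.1 h
          apply le_of_forall_lf
          · rintro (i | k)
            · exact (ihxL i _ _).2 (h'.1 i)
            · exact lf_of_le_moveLeft (y := mk yl yr yL yR + mk zl zr zL zR) (j := Sum.inr k)
                ((ihzL k).1 h)
          · rintro (j | k)
            · exact (ihyR j _).2 (h'.2 j)
            · exact lf_of_moveRight_le (x := mk xl xr xL xR + mk zl zr zL zR) (j := Sum.inr k)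
                ((ihzR k).1 h)
        · intro h
          rw [lf_iff_exists_le] at h
          rcases h with ⟨i, hi⟩ | ⟨j, hj⟩
          · exact lf_of_le_moveLeft (y := mk yl yr yL yR + mk zl zr zL zR) (j := Sum.inl i)
              ((ihyL i _).1 hi)
          · exact lf_of_moveRight_le (x := mk xl xr xL xR + mk zl zr zL zR) (j := Sum.inl j)
              ((ihxR j _ _).1 hj)

theorem add_le_add_left_all : ∀ x y z : PGame.{u},
    (x ≤ y → z + x ≤ z + y) ∧ (x ⧏ y → z + x ⧏ z + y) := by
  intro x
  induction x with
  | mk xl xr xL xR ihxL ihxR =>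
    intro y
    induction y with
    | mk yl yr yL yR ihyL ihyR =>
      intro z
      induction z with
      | mk zl zr zL zR ihzL ihzR =>
        constructor
        · intro h
          have h' := le_iff_forall_lf.1 h
          apply le_of_forall_lf
          · rintro (k | i)
            · exact lf_of_le_moveLeft (y := mk zl zr zL zR + mk yl yr yL yR) (j := Sum.inl k)
                ((ihzL k).1 h)
            · exact (ihxL i (mk yl yr yL yR) (mk zl zr zL zR)).2 (h'.1 i)
          · rintro (k | j)
            · exact lf_of_moveRight_le (x := mk zl zr zL zR + mk xl xr xL xR) (j := Sum.inl k)
                ((ihzR k).1 h)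
            · exact (ihyR j (mk zl zr zL zR)).2 (h'.2 j)
        · intro h
          rw [lf_iff_exists_le] at h
          rcases h with ⟨i, hi⟩ | ⟨j, hj⟩
          · exact lf_of_le_moveLeft (y := mk zl zr zL zR + mk yl yr yL yR) (j := Sum.inr i)
              ((ihyL i (mk zl zr zL zR)).1 hi)
          · exact lf_of_moveRight_le (x := mk zl zr zL zR + mk xl xr xL xR) (j := Sum.inr j)
              ((ihxR j (mk yl yr yL yR) (mk zl zr zL zR)).1 hj)

theorem add_congr_left {x y z : PGame.{u}} (h : x ≈ y) : x + z ≈ y + z :=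
  ⟨(add_le_add_right_all x y z).1 h.1, (add_le_add_right_all y x z).1 h.2⟩

theorem add_congr_right {x y z : PGame.{u}} (h : y ≈ z) : x + y ≈ x + z :=
  ⟨(add_le_add_left_all y z x).1 h.1, (add_le_add_left_all z y x).1 h.2⟩

theorem add_congr {w x y z : PGame.{u}} (h1 : w ≈ x) (h2 : y ≈ z) : w + y ≈ x + z :=
  PGame.Equiv.trans (add_congr_left h1) (add_congr_right h2)

theorem neg_add (x y : PGame.{u}) : -(x + y) = -x + -y := by
  induction x generalizing y with
  | mk xl xr xL xR ihxL ihxR =>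
    induction y with
    | mk yl yr yL yR ihyL ihyR =>
      refine pg_mk_congr (funext fun k => ?_) (funext fun k => ?_)
      · rcases k with i | j
        · exact ihxR i (mk yl yr yL yR)
        · exact ihyR j
      · rcases k with i | j
        · exact ihxL i (mk yl yr yL yR)
        · exact ihyL j

theorem neg_add_equiv (x y : PGame.{u}) : -(x + y) ≈ -x + -y := by
  rw [neg_add]; exact equiv_rfl

end PGame

end SetTheory

namespace Sprigs

/-! ### Auxiliary development for Statement 13 -/

section Stmt13Aux

open PGame

/-- Equivalence from option-wise matching. -/
theorem equiv_ext {x y : PGame}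
    (hL1 : ∀ i, ∃ j, x.moveLeft i ≈ y.moveLeft j)
    (hL2 : ∀ j, ∃ i, x.moveLeft i ≈ y.moveLeft j)
    (hR1 : ∀ i, ∃ j, x.moveRight i ≈ y.moveRight j)
    (hR2 : ∀ j, ∃ i, x.moveRight i ≈ y.moveRight j) : x ≈ y := by
  constructor
  · rw [le_iff_forall_lf]
    refine ⟨fun i => ?_, fun j => ?_⟩
    · obtain ⟨j, h⟩ := hL1 i; exact lf_of_le_moveLeft h.1
    · obtain ⟨i, h⟩ := hR2 j; exact lf_of_moveRight_le h.1
  · rw [le_iff_forall_lf]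
    refine ⟨fun i => ?_, fun j => ?_⟩
    · obtain ⟨i', h⟩ := hL2 i; exact lf_of_le_moveLeft h.2
    · obtain ⟨j', h⟩ := hR1 j; exact lf_of_moveRight_le h.2

/-- Shape trees for positive sprigs. -/
inductive T : Type
  | tip : T
  | li : T → T
  | ri : T → T
  | lr : T → T → T

/-- `{0, L | 0, R}`. -/
def mkc (L R : PG) : PG :=
  PGame.mk Bool Bool (fun b => bif b then 0 else L) (fun b => bif b then 0 else R)

/-- The model game of a positive sprig. -/
def spr : T → PG
  | .tip => mkc PGame.star 0
  | .li a => mkc (spr a) 0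
  | .ri b => mkc PGame.star (spr b)
  | .lr a b => mkc (spr a) (spr b)

def lopt : T → PG
  | .tip => PGame.star
  | .li a => spr a
  | .ri _ => PGame.star
  | .lr a _ => spr a

def ropt : T → PG
  | .tip => 0
  | .li _ => 0
  | .ri b => spr b
  | .lr _ b => spr b

theorem spr_def (t : T) : spr t = mkc (lopt t) (ropt t) := by
  cases t <;> rfl

def sz : T → ℕ
  | .tip => 1
  | .li a => sz a + 1
  | .ri b => sz b + 1
  | .lr a b => sz a + sz b + 1

theorem sz_pos (t : T) : 1 ≤ sz t := by cases t <;> simp [sz]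

theorem lopt_cases (t : T) :
    lopt t = PGame.star ∨ ∃ a, lopt t = spr a ∧ sz a < sz t := by
  cases t with
  | tip => exact Or.inl rfl
  | ri b => exact Or.inl rfl
  | li a => exact Or.inr ⟨a, rfl, by simp [sz]⟩
  | lr a b => exact Or.inr ⟨a, rfl, by simp only [sz]; omega⟩

theorem ropt_cases (t : T) :
    ropt t = 0 ∨ ∃ b, ropt t = spr b ∧ sz b < sz t := by
  cases t with
  | tip => exact Or.inl rfl
  | li a => exact Or.inl rfl
  | ri b => exact Or.inr ⟨b, rfl, by simp [sz]⟩
  | lr a b => exact Or.inr ⟨b, rfl, by simp only [sz]; omega⟩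

/-- Components of a model position. -/
inductive Cp : Type
  | P : T → Cp
  | N : T → Cp
  | S : Cp

def cg : Cp → PG
  | .P t => spr t
  | .N t => -spr t
  | .S => PGame.star

def posG : List Cp → PG
  | [] => 0
  | c :: l => cg c + posG l

def nP : List Cp → ℕ
  | [] => 0
  | .P _ :: l => nP l + 1
  | .N _ :: l => nP l
  | .S :: l => nP l

def nN : List Cp → ℕ
  | [] => 0
  | .P _ :: l => nN l
  | .N _ :: l => nN l + 1
  | .S :: l => nN l

def nS : List Cp → ℕ
  | [] => 0
  | .P _ :: l => nS l
  | .N _ :: l => nS l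
  | .S :: l => nS l + 1

def csz : Cp → ℕ
  | .P t => sz t + 1
  | .N t => sz t + 1
  | .S => 1

def mu : List Cp → ℕ
  | [] => 0
  | c :: l => csz c + mu l

/-- atomic count -/
def dd (l : List Cp) : ℤ := (nP l : ℤ) - (nN l : ℤ)

/-- parity -/
def par (l : List Cp) : ℕ := (nP l + nN l + nS l) % 2

/-- classification of the position reached by an arbitrary Right move -/
def K (l l' : List Cp) : Prop :=
  (nP l' = nP l ∧ nN l' = nN l ∧ nS l' = nS l ∧ (1 ≤ nP l ∨ 1 ≤ nN l)) ∨
  (nP l = nP l' + 1 ∧ nN l' = nN l ∧ nS l' = nS l) ∨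
  (nN l = nN l' + 1 ∧ nP l' = nP l ∧ nS l' = nS l) ∨
  (nN l = nN l' + 1 ∧ nP l' = nP l ∧ nS l' = nS l + 1) ∨
  (nS l = nS l' + 1 ∧ nP l' = nP l ∧ nN l' = nN l)

theorem K_cons {l l' : List Cp} (c : Cp) (h : K l l') : K (c :: l) (c :: l') := by
  unfold K at h ⊢
  cases c <;> rcases h with h|h|h|h|h <;> simp only [nP, nN, nS] <;>
    first
      | exact Or.inl (by omega)
      | exact Or.inr (Or.inl (by omega))
      | exact Or.inr (Or.inr (Or.inl (by omega)))
      | exact Or.inr (Or.inr (Or.inr (Or.inl (by omega))))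
      | exact Or.inr (Or.inr (Or.inr (Or.inr (by omega))))

theorem K_sound {l l' : List Cp} (h : K l l')
    (h2 : 2 ≤ dd l ∨ (dd l = 1 ∧ par l = 0) ∨ (dd l = 0 ∧ nP l = 0 ∧ par l = 0)) :
    1 ≤ dd l' ∨ (dd l' = 0 ∧ par l' = 1) := by
  unfold K dd par at *
  rcases h with h|h|h|h|h <;> rcases h2 with h2|h2|h2 <;> omega

@[simp] theorem cg_P (t : T) : cg (Cp.P t) = spr t := rfl
@[simp] theorem cg_N (t : T) : cg (Cp.N t) = -spr t := rfl
@[simp] theorem cg_S : cg Cp.S = PGame.star := rfl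

theorem posG_cons (c : Cp) (l : List Cp) : posG (c :: l) = cg c + posG l := rfl

/-- classification of right options of a positive sprig -/
theorem sprR (t : T) (i : (spr t).RightMoves) :
    (spr t).moveRight i = 0 ∨ ∃ b, (spr t).moveRight i = spr b ∧ sz b < sz t := by
  cases t <;> cases i
  case tip.true => exact Or.inl rfl
  case tip.false => exact Or.inl rfl
  case li.true => exact Or.inl rfl
  case li.false => exact Or.inl rfl
  case ri.true => exact Or.inl rfl
  case ri.false => exact Or.inr ⟨_, rfl, by simp only [sz]; omega⟩
  case lr.true => exact Or.inl rfl
  case lr.false => exact Or.inr ⟨_, rfl, by simp only [sz]; omega⟩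

/-- classification of right options of a negative sprig -/
theorem negR (t : T) (i : (-spr t).RightMoves) :
    (-spr t).moveRight i = 0 ∨ (-spr t).moveRight i = PGame.star ∨
      ∃ a, (-spr t).moveRight i = -spr a ∧ sz a < sz t := by
  cases t <;> cases i
  case tip.true => exact Or.inl neg_zero
  case tip.false => exact Or.inr (Or.inl neg_star)
  case li.true => exact Or.inl neg_zero
  case li.false => exact Or.inr (Or.inr ⟨_, rfl, by simp only [sz]; omega⟩)
  case ri.true => exact Or.inl neg_zero
  case ri.false => exact Or.inr (Or.inl neg_star)
  case lr.true => exact Or.inl neg_zero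
  case lr.false => exact Or.inr (Or.inr ⟨_, rfl, by simp only [sz]; omega⟩)

/-- kill move on a positive sprig -/
def pk : (t : T) → (spr t).LeftMoves
  | .tip => true
  | .li _ => true
  | .ri _ => true
  | .lr _ _ => true

theorem pk_eq (t : T) : (spr t).moveLeft (pk t) = 0 := by cases t <;> rfl

/-- descending move on a positive sprig -/
def pd : (t : T) → (spr t).LeftMoves
  | .tip => false
  | .li _ => false
  | .ri _ => false
  | .lr _ _ => false

theorem pd_eq (t : T) : (spr t).moveLeft (pd t) = lopt t := by cases t <;> rfl

/-- kill move on a negative sprig -/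
def nk : (t : T) → (-spr t).LeftMoves
  | .tip => true
  | .li _ => true
  | .ri _ => true
  | .lr _ _ => true

theorem nk_eq (t : T) : (-spr t).moveLeft (nk t) = 0 := by
  cases t <;> exact neg_zero

theorem rclass : ∀ (l : List Cp) (j : (posG l).RightMoves),
    ∃ l', ((posG l).moveRight j ≈ posG l') ∧ mu l' < mu l ∧ K l l' := by
  intro l
  induction l with
  | nil => exact fun j => (j : PEmpty).elim
  | cons c ltl IH =>
    show ∀ j : (cg c + posG ltl).RightMoves, ∃ l',
      ((cg c + posG ltl).moveRight j ≈ posG l') ∧ mu l' < mu (c :: ltl) ∧ K (c :: ltl) l'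
    intro j
    refine rightMoves_add_cases (P := fun j => ∃ l',
      ((cg c + posG ltl).moveRight j ≈ posG l') ∧ mu l' < mu (c :: ltl) ∧ K (c :: ltl) l')
      j ?_ ?_
    · intro i
      rw [add_moveRight_inl]
      cases c with
      | S =>
        refine ⟨ltl, ?_, ?_, ?_⟩
        · rw [show (cg Cp.S).moveRight i = 0 from rfl]; exact zero_add_equiv _
        · simp only [mu, csz]; omega
        · unfold K; exact Or.inr (Or.inr (Or.inr (Or.inr ⟨rfl, rfl, rfl⟩)))
      | P t =>
        have hsz := sz_pos t
        rcases sprR t i with h | ⟨b, hb, hszb⟩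
        · refine ⟨ltl, ?_, ?_, ?_⟩
          · rw [show (cg (Cp.P t)).moveRight i = 0 from h]; exact zero_add_equiv _
          · simp only [mu, csz]; omega
          · unfold K; exact Or.inr (Or.inl ⟨rfl, rfl, rfl⟩)
        · refine ⟨Cp.P b :: ltl, ?_, ?_, ?_⟩
          · rw [show (cg (Cp.P t)).moveRight i = spr b from hb]; exact equiv_rfl
          · simp only [mu, csz]; omega
          · unfold K; exact Or.inl ⟨rfl, rfl, rfl, Or.inl (Nat.le_add_left 1 _)⟩
      | N t =>
        have hsz := sz_pos t
        rcases negR t i with h | h | ⟨a, ha, hsza⟩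
        · refine ⟨ltl, ?_, ?_, ?_⟩
          · rw [show (cg (Cp.N t)).moveRight i = 0 from h]; exact zero_add_equiv _
          · simp only [mu, csz]; omega
          · unfold K; exact Or.inr (Or.inr (Or.inl ⟨rfl, rfl, rfl⟩))
        · refine ⟨Cp.S :: ltl, ?_, ?_, ?_⟩
          · rw [show (cg (Cp.N t)).moveRight i = PGame.star from h]; exact equiv_rfl
          · simp only [mu, csz]; omega
          · unfold K; exact Or.inr (Or.inr (Or.inr (Or.inl ⟨rfl, rfl, rfl⟩)))
        · refine ⟨Cp.N a :: ltl, ?_, ?_, ?_⟩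
          · rw [show (cg (Cp.N t)).moveRight i = -spr a from ha]; exact equiv_rfl
          · simp only [mu, csz]; omega
          · unfold K; exact Or.inl ⟨rfl, rfl, rfl, Or.inr (Nat.le_add_left 1 _)⟩
    · intro i
      rw [add_moveRight_inr]
      obtain ⟨l', h1, h2, h3⟩ := IH i
      refine ⟨c :: l', add_congr_right h1, ?_, K_cons c h3⟩
      simp only [mu]; omega

theorem killP : ∀ (l : List Cp), 1 ≤ nP l → ∃ (i : (posG l).LeftMoves) (l' : List Cp),
    ((posG l).moveLeft i ≈ posG l') ∧ mu l' < mu l ∧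
    nP l = nP l' + 1 ∧ nN l' = nN l ∧ nS l' = nS l := by
  intro l
  induction l with
  | nil => intro h; simp [nP] at h
  | cons c ltl IH =>
    intro h
    cases c with
    | P t =>
      have hsz := sz_pos t
      refine ⟨toLeftMovesAdd (Sum.inl (pk t)), ltl, ?_, ?_, ?_⟩
      · have e : (posG (Cp.P t :: ltl)).moveLeft (toLeftMovesAdd (Sum.inl (pk t)))
            = 0 + posG ltl := by
          rw [← pk_eq t]; exact add_moveLeft_inl (posG ltl) (pk t)
        rw [e]; exact zero_add_equiv _
      · simp only [mu, csz]; omega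
      · first
          | exact ⟨rfl, rfl, rfl⟩
          | exact Or.inl ⟨rfl, rfl, rfl⟩
          | exact Or.inr ⟨rfl, rfl, rfl⟩
          | (simp only [nP, nN, nS]; omega)
    | N t =>
      obtain ⟨i, l', h1, h2, h3⟩ := IH (by simpa [nP] using h)
      refine ⟨toLeftMovesAdd (Sum.inr i), Cp.N t :: l', ?_, ?_, ?_⟩
      · have e : (posG (Cp.N t :: ltl)).moveLeft (toLeftMovesAdd (Sum.inr i))
            = cg (Cp.N t) + (posG ltl).moveLeft i := add_moveLeft_inr _ i
        rw [e]; exact add_congr_right h1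
      · simp only [mu]; omega
      · first
          | exact ⟨rfl, rfl, rfl⟩
          | exact Or.inl ⟨rfl, rfl, rfl⟩
          | exact Or.inr ⟨rfl, rfl, rfl⟩
          | (simp only [nP, nN, nS]; omega)
    | S =>
      obtain ⟨i, l', h1, h2, h3⟩ := IH (by simpa [nP] using h)
      refine ⟨toLeftMovesAdd (Sum.inr i), Cp.S :: l', ?_, ?_, ?_⟩
      · have e : (posG (Cp.S :: ltl)).moveLeft (toLeftMovesAdd (Sum.inr i))
            = cg Cp.S + (posG ltl).moveLeft i := add_moveLeft_inr _ i
        rw [e]; exact add_congr_right h1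
      · simp only [mu]; omega
      · first
          | exact ⟨rfl, rfl, rfl⟩
          | exact Or.inl ⟨rfl, rfl, rfl⟩
          | exact Or.inr ⟨rfl, rfl, rfl⟩
          | (simp only [nP, nN, nS]; omega)

theorem killN : ∀ (l : List Cp), 1 ≤ nN l → ∃ (i : (posG l).LeftMoves) (l' : List Cp),
    ((posG l).moveLeft i ≈ posG l') ∧ mu l' < mu l ∧
    nN l = nN l' + 1 ∧ nP l' = nP l ∧ nS l' = nS l := by
  intro l
  induction l with
  | nil => intro h; simp [nN] at h
  | cons c ltl IH =>
    intro h
    cases c with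
    | N t =>
      have hsz := sz_pos t
      refine ⟨toLeftMovesAdd (Sum.inl (nk t)), ltl, ?_, ?_, ?_⟩
      · have e : (posG (Cp.N t :: ltl)).moveLeft (toLeftMovesAdd (Sum.inl (nk t)))
            = 0 + posG ltl := by
          rw [← nk_eq t]; exact add_moveLeft_inl (posG ltl) (nk t)
        rw [e]; exact zero_add_equiv _
      · simp only [mu, csz]; omega
      · first
          | exact ⟨rfl, rfl, rfl⟩
          | exact Or.inl ⟨rfl, rfl, rfl⟩
          | exact Or.inr ⟨rfl, rfl, rfl⟩
          | (simp only [nP, nN, nS]; omega)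
    | P t =>
      obtain ⟨i, l', h1, h2, h3⟩ := IH (by simpa [nN] using h)
      refine ⟨toLeftMovesAdd (Sum.inr i), Cp.P t :: l', ?_, ?_, ?_⟩
      · have e : (posG (Cp.P t :: ltl)).moveLeft (toLeftMovesAdd (Sum.inr i))
            = cg (Cp.P t) + (posG ltl).moveLeft i := add_moveLeft_inr _ i
        rw [e]; exact add_congr_right h1
      · simp only [mu]; omega
      · first
          | exact ⟨rfl, rfl, rfl⟩
          | exact Or.inl ⟨rfl, rfl, rfl⟩
          | exact Or.inr ⟨rfl, rfl, rfl⟩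
          | (simp only [nP, nN, nS]; omega)
    | S =>
      obtain ⟨i, l', h1, h2, h3⟩ := IH (by simpa [nN] using h)
      refine ⟨toLeftMovesAdd (Sum.inr i), Cp.S :: l', ?_, ?_, ?_⟩
      · have e : (posG (Cp.S :: ltl)).moveLeft (toLeftMovesAdd (Sum.inr i))
            = cg Cp.S + (posG ltl).moveLeft i := add_moveLeft_inr _ i
        rw [e]; exact add_congr_right h1
      · simp only [mu]; omega
      · first
          | exact ⟨rfl, rfl, rfl⟩
          | exact Or.inl ⟨rfl, rfl, rfl⟩
          | exact Or.inr ⟨rfl, rfl, rfl⟩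
          | (simp only [nP, nN, nS]; omega)

theorem killS : ∀ (l : List Cp), 1 ≤ nS l → ∃ (i : (posG l).LeftMoves) (l' : List Cp),
    ((posG l).moveLeft i ≈ posG l') ∧ mu l' < mu l ∧
    nS l = nS l' + 1 ∧ nP l' = nP l ∧ nN l' = nN l := by
  intro l
  induction l with
  | nil => intro h; simp [nS] at h
  | cons c ltl IH =>
    intro h
    cases c with
    | S =>
      refine ⟨toLeftMovesAdd (Sum.inl PUnit.unit), ltl, ?_, ?_, ?_⟩
      · have e : (posG (Cp.S :: ltl)).moveLeft (toLeftMovesAdd (Sum.inl PUnit.unit))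
            = 0 + posG ltl := add_moveLeft_inl (x := cg Cp.S) (posG ltl) PUnit.unit
        rw [e]; exact zero_add_equiv _
      · simp only [mu, csz]; omega
      · first
          | exact ⟨rfl, rfl, rfl⟩
          | exact Or.inl ⟨rfl, rfl, rfl⟩
          | exact Or.inr ⟨rfl, rfl, rfl⟩
          | (simp only [nP, nN, nS]; omega)
    | P t =>
      obtain ⟨i, l', h1, h2, h3⟩ := IH (by simpa [nS] using h)
      refine ⟨toLeftMovesAdd (Sum.inr i), Cp.P t :: l', ?_, ?_, ?_⟩
      · have e : (posG (Cp.P t :: ltl)).moveLeft (toLeftMovesAdd (Sum.inr i))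
            = cg (Cp.P t) + (posG ltl).moveLeft i := add_moveLeft_inr _ i
        rw [e]; exact add_congr_right h1
      · simp only [mu]; omega
      · first
          | exact ⟨rfl, rfl, rfl⟩
          | exact Or.inl ⟨rfl, rfl, rfl⟩
          | exact Or.inr ⟨rfl, rfl, rfl⟩
          | (simp only [nP, nN, nS]; omega)
    | N t =>
      obtain ⟨i, l', h1, h2, h3⟩ := IH (by simpa [nS] using h)
      refine ⟨toLeftMovesAdd (Sum.inr i), Cp.N t :: l', ?_, ?_, ?_⟩
      · have e : (posG (Cp.N t :: ltl)).moveLeft (toLeftMovesAdd (Sum.inr i))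
            = cg (Cp.N t) + (posG ltl).moveLeft i := add_moveLeft_inr _ i
        rw [e]; exact add_congr_right h1
      · simp only [mu]; omega
      · first
          | exact ⟨rfl, rfl, rfl⟩
          | exact Or.inl ⟨rfl, rfl, rfl⟩
          | exact Or.inr ⟨rfl, rfl, rfl⟩
          | (simp only [nP, nN, nS]; omega)

theorem descP : ∀ (l : List Cp), 1 ≤ nP l → ∃ (i : (posG l).LeftMoves) (l' : List Cp),
    ((posG l).moveLeft i ≈ posG l') ∧ mu l' < mu l ∧
    ((nP l' = nP l ∧ nN l' = nN l ∧ nS l' = nS l) ∨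
      (nP l = nP l' + 1 ∧ nN l' = nN l ∧ nS l' = nS l + 1)) := by
  intro l
  induction l with
  | nil => intro h; simp [nP] at h
  | cons c ltl IH =>
    intro h
    cases c with
    | P t =>
      have e : (posG (Cp.P t :: ltl)).moveLeft (toLeftMovesAdd (Sum.inl (pd t)))
          = lopt t + posG ltl := by
        rw [← pd_eq t]; exact add_moveLeft_inl (posG ltl) (pd t)
      rcases lopt_cases t with hst | ⟨a, ha, hsza⟩
      · refine ⟨toLeftMovesAdd (Sum.inl (pd t)), Cp.S :: ltl, ?_, ?_, ?_⟩
        · rw [e, hst]; exact equiv_rfl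
        · have := sz_pos t; simp only [mu, csz]; omega
        · first
          | exact ⟨rfl, rfl, rfl⟩
          | exact Or.inl ⟨rfl, rfl, rfl⟩
          | exact Or.inr ⟨rfl, rfl, rfl⟩
          | (simp only [nP, nN, nS]; omega)
      · refine ⟨toLeftMovesAdd (Sum.inl (pd t)), Cp.P a :: ltl, ?_, ?_, ?_⟩
        · rw [e, ha]; exact equiv_rfl
        · simp only [mu, csz]; omega
        · first
          | exact ⟨rfl, rfl, rfl⟩
          | exact Or.inl ⟨rfl, rfl, rfl⟩
          | exact Or.inr ⟨rfl, rfl, rfl⟩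
          | (simp only [nP, nN, nS]; omega)
    | N t =>
      obtain ⟨i, l', h1, h2, h3⟩ := IH (by simpa [nP] using h)
      refine ⟨toLeftMovesAdd (Sum.inr i), Cp.N t :: l', ?_, ?_, ?_⟩
      · have e : (posG (Cp.N t :: ltl)).moveLeft (toLeftMovesAdd (Sum.inr i))
            = cg (Cp.N t) + (posG ltl).moveLeft i := add_moveLeft_inr _ i
        rw [e]; exact add_congr_right h1
      · simp only [mu]; omega
      · first
          | exact ⟨rfl, rfl, rfl⟩
          | exact Or.inl ⟨rfl, rfl, rfl⟩
          | exact Or.inr ⟨rfl, rfl, rfl⟩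
          | (simp only [nP, nN, nS]; omega)
    | S =>
      obtain ⟨i, l', h1, h2, h3⟩ := IH (by simpa [nP] using h)
      refine ⟨toLeftMovesAdd (Sum.inr i), Cp.S :: l', ?_, ?_, ?_⟩
      · have e : (posG (Cp.S :: ltl)).moveLeft (toLeftMovesAdd (Sum.inr i))
            = cg Cp.S + (posG ltl).moveLeft i := add_moveLeft_inr _ i
        rw [e]; exact add_congr_right h1
      · simp only [mu]; omega
      · first
          | exact ⟨rfl, rfl, rfl⟩
          | exact Or.inl ⟨rfl, rfl, rfl⟩
          | exact Or.inr ⟨rfl, rfl, rfl⟩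
          | (simp only [nP, nN, nS]; omega)

set_option maxHeartbeats 1000000 in
theorem posG_main : ∀ (l : List Cp),
    ((2 ≤ dd l ∨ (dd l = 1 ∧ par l = 0) ∨ (dd l = 0 ∧ nP l = 0 ∧ par l = 0)) → 0 ≤ posG l) ∧
    ((1 ≤ dd l ∨ (dd l = 0 ∧ par l = 1)) → 0 ⧏ posG l) := by
  suffices H : ∀ n (l : List Cp), mu l < n →
      (((2 ≤ dd l ∨ (dd l = 1 ∧ par l = 0) ∨ (dd l = 0 ∧ nP l = 0 ∧ par l = 0)) → 0 ≤ posG l) ∧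
        ((1 ≤ dd l ∨ (dd l = 0 ∧ par l = 1)) → 0 ⧏ posG l)) by
    exact fun l => H (mu l + 1) l (Nat.lt_succ_self _)
  intro n
  induction n with
  | zero => exact fun l h => absurd h (Nat.not_lt_zero _)
  | succ n IH =>
    intro l hl
    constructor
    · intro hyp
      rw [zero_le_lf]
      intro j
      obtain ⟨l', he, hmu, hK⟩ := rclass l j
      rw [lf_congr_right he]
      exact (IH l' (by omega)).2 (K_sound hK hyp)
    · intro hyp
      rw [zero_lf_le]
      by_cases hn1 : 1 ≤ nN l
      · obtain ⟨i, l', he, hmu, e1, e2, e3⟩ := killN l hn1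
        exact ⟨i, (le_congr_right he).2 ((IH l' (by omega)).1 (by unfold dd par at *; omega))⟩
      · by_cases hp1 : 1 ≤ nP l
        · by_cases hpar : par l = 1
          · obtain ⟨i, l', he, hmu, e1, e2, e3⟩ := killP l hp1
            exact ⟨i, (le_congr_right he).2 ((IH l' (by omega)).1
              (by unfold dd par at *; omega))⟩
          · obtain ⟨i, l', he, hmu, hc⟩ := descP l hp1
            exact ⟨i, (le_congr_right he).2 ((IH l' (by omega)).1
              (by unfold dd par at *; omega))⟩
        · have hs : 1 ≤ nS l := by unfold dd par at *; omega
          obtain ⟨i, l', he, hmu, e1, e2, e3⟩ := killS l hs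
          exact ⟨i, (le_congr_right he).2 ((IH l' (by omega)).1
            (by unfold dd par at *; omega))⟩
theorem mk_congr {α β : Type} (f f' : α → PGame) (g g' : β → PGame)
    (h1 : f = f') (h2 : g = g') : PGame.mk α β f g = PGame.mk α β f' g' := by
  rw [h1, h2]

theorem neg_ordSum : ∀ X : PGame.{0}, -(ordSum PGame.star X) = ordSum PGame.star (-X) := by
  intro X
  induction X with
  | mk α β L R ihL ihR =>
    rw [PGame.neg_def]
    have h1 : (fun j => -(Sum.elim PGame.star.moveRight (fun b => ordSum PGame.star (R b)) j))
        = Sum.elim PGame.star.moveLeft (fun b => ordSum PGame.star (-(R b))) := by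
      funext j
      rcases j with u | b
      · exact neg_zero
      · exact ihR b
    have h2 : (fun i => -(Sum.elim PGame.star.moveLeft (fun a => ordSum PGame.star (L a)) i))
        = Sum.elim PGame.star.moveRight (fun a => ordSum PGame.star (-(L a))) := by
      funext i
      rcases i with u | a
      · exact neg_zero
      · exact ihL a
    exact mk_congr _ _ _ _ h1 h2

theorem sprigNeg_eq (q : ℚ) : sprigNeg q = -sprig q := by
  rw [sprigNeg, sprig, neg_ordSum]

theorem ord_zero : ordSum PGame.star (natGame 0) ≈ PGame.star := by
  apply equiv_ext
  · rintro (u | a)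
    · exact ⟨PUnit.unit, equiv_rfl⟩
    · exact PEmpty.elim a
  · intro j
    exact ⟨Sum.inl PUnit.unit, equiv_rfl⟩
  · rintro (u | b)
    · exact ⟨PUnit.unit, equiv_rfl⟩
    · exact PEmpty.elim b
  · intro j
    exact ⟨Sum.inl PUnit.unit, equiv_rfl⟩

theorem ordSum_star_equiv {α β : Type} {L : α → PGame} {R : β → PGame} {A B : PG}
    (hA : ∀ a, ordSum PGame.star (L a) ≈ A) (hB : ∀ b, ordSum PGame.star (R b) ≈ B)
    (ha : Nonempty α) (hb : Nonempty β ∨ B = 0) :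
    ordSum PGame.star (PGame.mk α β L R) ≈ mkc A B := by
  apply equiv_ext
  · rintro (u | a)
    · exact ⟨true, equiv_rfl⟩
    · exact ⟨false, hA a⟩
  · intro j
    rcases j with _ | _
    · obtain ⟨a⟩ := ha
      exact ⟨Sum.inr a, hA a⟩
    · exact ⟨Sum.inl PUnit.unit, equiv_rfl⟩
  · rintro (u | b)
    · exact ⟨true, equiv_rfl⟩
    · exact ⟨false, hB b⟩
  · intro j
    rcases j with _ | _
    · rcases hb with hbne | hb0
      · obtain ⟨b⟩ := hbne
        exact ⟨Sum.inr b, hB b⟩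
      · refine ⟨Sum.inl PUnit.unit, ?_⟩
        rw [show (mkc A B).moveRight false = B from rfl, hb0]
        exact equiv_rfl
    · exact ⟨Sum.inl PUnit.unit, equiv_rfl⟩

theorem encNat : ∀ k : ℕ, ∃ t : T, ordSum PGame.star (natGame (k + 1)) ≈ spr t := by
  intro k
  induction k with
  | zero =>
    exact ⟨T.tip, ordSum_star_equiv (fun _ => ord_zero) (fun b => PEmpty.elim b)
      ⟨PUnit.unit⟩ (Or.inr rfl)⟩
  | succ k ih =>
    obtain ⟨t, ht⟩ := ih
    exact ⟨T.li t, ordSum_star_equiv (fun _ => ht) (fun b => PEmpty.elim b)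
      ⟨PUnit.unit⟩ (Or.inr rfl)⟩

theorem dGame_zero : ∀ n, dGame n 0 = natGame 0 := by
  intro n
  induction n with
  | zero => simp [dGame, intGame]
  | succ n ih => simp [dGame, Int.zero_emod, Int.zero_ediv, ih]

theorem intGame_pos (m : ℤ) (h : 0 < m) :
    ∃ t, ordSum PGame.star (intGame m) ≈ spr t := by
  rw [intGame, if_pos h.le]
  obtain ⟨k, hk⟩ : ∃ k, m.toNat = k + 1 := ⟨m.toNat - 1, by omega⟩
  rw [hk]
  exact encNat k

theorem encD : ∀ (n : ℕ) (m : ℤ), 0 < m → ∃ t, ordSum PGame.star (dGame n m) ≈ spr t := by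
  intro n
  induction n with
  | zero => exact fun m hm => intGame_pos m hm
  | succ n ih =>
    intro m hm
    by_cases he : m % 2 = 0
    · have e0 : dGame (n + 1) m = if m % 2 = 0 then dGame n (m / 2) else PGame.mk PUnit PUnit
          (fun _ => dGame n ((m - 1) / 2)) (fun _ => dGame n ((m + 1) / 2)) := rfl
      have e : dGame (n + 1) m = dGame n (m / 2) := by rw [e0, if_pos he]
      rw [e]
      exact ih _ (by omega)
    · have e0 : dGame (n + 1) m = if m % 2 = 0 then dGame n (m / 2) else PGame.mk PUnit PUnit
          (fun _ => dGame n ((m - 1) / 2)) (fun _ => dGame n ((m + 1) / 2)) := rfl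
      have e : dGame (n + 1) m = PGame.mk PUnit PUnit
          (fun _ => dGame n ((m - 1) / 2)) (fun _ => dGame n ((m + 1) / 2)) := by
        rw [e0, if_neg he]
      rw [e]
      obtain ⟨tr, htr⟩ := ih ((m + 1) / 2) (by omega)
      by_cases hl : (m - 1) / 2 = 0
      · refine ⟨T.ri tr, ordSum_star_equiv (fun a => ?_) (fun b => htr)
          ⟨PUnit.unit⟩ (Or.inl ⟨PUnit.unit⟩)⟩
        rw [hl, dGame_zero]
        exact ord_zero
      · obtain ⟨tl, htl⟩ := ih ((m - 1) / 2) (by omega)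
        exact ⟨T.lr tl tr, ordSum_star_equiv (fun _ => htl) (fun _ => htr)
          ⟨PUnit.unit⟩ (Or.inl ⟨PUnit.unit⟩)⟩

theorem encQ (q : ℚ) (h : 0 < q) : ∃ t, sprig q ≈ spr t :=
  encD (Nat.log 2 q.den) q.num (Rat.num_pos.mpr h)

def mirC : Cp → Cp
  | .P t => .N t
  | .N t => .P t
  | .S => .S

def mir (l : List Cp) : List Cp := l.map mirC

theorem neg_posG : ∀ l, -(posG l) ≈ posG (mir l) := by
  intro l
  induction l with
  | nil =>
    rw [show posG [] = 0 from rfl, neg_zero]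
    exact equiv_rfl
  | cons c l ih =>
    show -(cg c + posG l) ≈ cg (mirC c) + posG (mir l)
    refine PGame.Equiv.trans (neg_add_equiv _ _) (add_congr ?_ ih)
    cases c with
    | P t => exact equiv_rfl
    | N t => rw [show cg (mirC (Cp.N t)) = spr t from rfl, ← neg_neg (spr t)]; exact equiv_rfl
    | S => rw [show cg (mirC Cp.S) = PGame.star from rfl, ← neg_star]; exact equiv_rfl

theorem nP_mir : ∀ l, nP (mir l) = nN l := by
  intro l
  induction l with
  | nil => rfl
  | cons c l ih => cases c <;> simp [mir, mirC, nP, nN] at * <;> omega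

theorem nN_mir : ∀ l, nN (mir l) = nP l := by
  intro l
  induction l with
  | nil => rfl
  | cons c l ih => cases c <;> simp [mir, mirC, nP, nN] at * <;> omega

theorem nS_mir : ∀ l, nS (mir l) = nS l := by
  intro l
  induction l with
  | nil => rfl
  | cons c l ih => cases c <;> simp [mir, mirC, nS] at * <;> omega

theorem glue_base : ∀ (Y : List ℚ), (∀ q ∈ Y, 0 < q) →
    ∃ l : List Cp, (sprigsGame [] Y + PGame.star ≈ posG l) ∧
      nP l = 0 ∧ nN l = Y.length ∧ nS l = 1 := by
  intro Y
  induction Y with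
  | nil =>
    intro _
    refine ⟨[Cp.S], ?_, rfl, rfl, rfl⟩
    exact PGame.Equiv.trans (zero_add_equiv _) (PGame.Equiv.symm (add_zero_equiv _))
  | cons y Y ih =>
    intro hY
    obtain ⟨t, ht⟩ := encQ y (hY y List.mem_cons_self)
    obtain ⟨l, hl, c1, c2, c3⟩ := ih (fun q hq => hY q (List.mem_cons_of_mem _ hq))
    refine ⟨Cp.N t :: l, ?_, by simpa [nP] using c1, by simpa [nN] using c2,
      by simpa [nS] using c3⟩
    show (sprigNeg y + sprigsGame [] Y) + PGame.star ≈ cg (Cp.N t) + posG l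
    refine PGame.Equiv.trans add_assoc_equiv (add_congr ?_ hl)
    rw [sprigNeg_eq]
    exact neg_equiv_neg_iff.mpr ht

theorem glue : ∀ (X : List ℚ), ∀ (Y : List ℚ), (∀ q ∈ X, 0 < q) → (∀ q ∈ Y, 0 < q) →
    ∃ l : List Cp, (sprigsGame X Y + PGame.star ≈ posG l) ∧
      nP l = X.length ∧ nN l = Y.length ∧ nS l = 1 := by
  intro X
  induction X with
  | nil => exact fun Y _ hY => glue_base Y hY
  | cons x X ih =>
    intro Y hX hY
    obtain ⟨t, ht⟩ := encQ x (hX x List.mem_cons_self)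
    obtain ⟨l, hl, c1, c2, c3⟩ := ih Y (fun q hq => hX q (List.mem_cons_of_mem _ hq)) hY
    refine ⟨Cp.P t :: l, ?_, by simpa [nP] using c1, by simpa [nN] using c2,
      by simpa [nS] using c3⟩
    show (sprig x + sprigsGame X Y) + PGame.star ≈ cg (Cp.P t) + posG l
    exact PGame.Equiv.trans add_assoc_equiv (add_congr ht hl)

end Stmt13Aux

/-- In normal play `(X, Y) + *` is `> 0`, fuzzy with `0`, or `< 0`
according as `|X| > |Y|`, `|X| = |Y|`, `|X| < |Y|`. -/
theorem stmt13 (X Y : List ℚ)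
    (hX : ∀ q ∈ X, 0 < q ∧ IsDyadic q) (hY : ∀ q ∈ Y, 0 < q ∧ IsDyadic q) :
    (Y.length < X.length → 0 < sprigsGame X Y + PGame.star) ∧
    (X.length = Y.length → PGame.Fuzzy (sprigsGame X Y + PGame.star) 0) ∧
    (X.length < Y.length → sprigsGame X Y + PGame.star < 0) := by
  obtain ⟨l, he, c1, c2, c3⟩ := glue X Y (fun q hq => (hX q hq).1) (fun q hq => (hY q hq).1)
  have m1 := nP_mir l
  have m2 := nN_mir l
  have m3 := nS_mir l
  refine ⟨?_, ?_, ?_⟩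
  · intro h
    rw [PGame.lt_congr_right he, PGame.lt_iff_le_and_lf]
    exact ⟨(posG_main l).1 (by unfold dd par; omega),
      (posG_main l).2 (by unfold dd par; omega)⟩
  · intro h
    rw [PGame.fuzzy_congr_left he]
    refine ⟨?_, ?_⟩
    · rw [← PGame.zero_lf_neg_iff, PGame.lf_congr_right (neg_posG l)]
      exact (posG_main (mir l)).2 (by unfold dd par; omega)
    · exact (posG_main l).2 (by unfold dd par; omega)
  · intro h
    rw [PGame.lt_congr_left he, ← PGame.zero_lt_neg_iff,
      PGame.lt_congr_right (neg_posG l), PGame.lt_iff_le_and_lf]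
    exact ⟨(posG_main (mir l)).1 (by unfold dd par; omega),
      (posG_main (mir l)).2 (by unfold dd par; omega)⟩

end Sprigs
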